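/- Suppose f : 2^V → ℝ is monotone, submodular, nonnegative with f(∅) = 0, and ĥ is an approximation of f satisfying |ĥ(S) − f(S)| ≤ γ · f(S*) for all evaluated sets S, where S* is an optimal set of size k and 0 ≤ γ ≤ ε/(2k(1 − 1/e)). If S^g is the size-k set produced by greedily maximizing ĥ, then f(S^g) ≥ (1 − 1/e − ε) · f(S*). -/

import Mathlib

lemma submod_sum_bound {V : Type*} [DecidableEq V] (f : Finset V → ℝ)
    (hsub : ∀ A B : Finset V, ∀ x : V, A ⊆ B → x ∉ B →
      f (insert x B) - f B ≤ f (insert x A) - f A)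
    (A : Finset V) : ∀ B : Finset V,
    f (A ∪ B) - f A ≤ ∑ x ∈ B \ A, (f (insert x A) - f A) := by
  intro B
  induction B using Finset.induction_on with
  | empty => simp
  | @insert y B' hy ih =>
    by_cases hyA : y ∈ A
    · rw [Finset.union_insert, Finset.insert_eq_self.mpr (Finset.mem_union_left _ hyA),
          Finset.insert_sdiff_of_mem _ hyA]
      exact ih
    · rw [Finset.union_insert, Finset.insert_sdiff_of_notMem _ hyA,
          Finset.sum_insert (by simp [hy])]
      have h1 : f (insert y (A ∪ B')) - f (A ∪ B') ≤ f (insert y A) - f A :=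
        hsub A (A ∪ B') y Finset.subset_union_left (by simp [hyA, hy])
      linarith

/-- Greedy maximization of an approximate oracle `ĥ` of a monotone, submodular,
nonnegative function `f` yields a `(1 - 1/e - ε)` approximation. -/
theorem greedy_approx_oracle
    {V : Type*} [DecidableEq V] (f h : Finset V → ℝ) (k : ℕ) (hk : 1 ≤ k)
    (ε γ : ℝ) (hε : 0 ≤ ε)
    (hγ : 0 ≤ γ ∧ γ ≤ ε / (2 * k * (1 - 1 / Real.exp 1)))
    (hmono : ∀ A B : Finset V, A ⊆ B → f A ≤ f B)
    (hsub : ∀ A B : Finset V, ∀ x : V, A ⊆ B → x ∉ B →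
      f (insert x B) - f B ≤ f (insert x A) - f A)
    (hnonneg : ∀ A : Finset V, 0 ≤ f A)
    (hempty : f ∅ = 0)
    (Sstar : Finset V) (hSstar : Sstar.card = k)
    (hopt : ∀ T : Finset V, T.card = k → f T ≤ f Sstar)
    (happrox : ∀ A : Finset V, |h A - f A| ≤ γ * f Sstar)
    (s : ℕ → V) (S : ℕ → Finset V)
    (hS0 : S 0 = ∅)
    (hSsucc : ∀ i, i < k → S (i + 1) = insert (s i) (S i))
    (hgreedy : ∀ i, i < k → ∀ x : V, x ∉ S i →
      h (insert x (S i)) ≤ h (insert (s i) (S i))) :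
    (1 - 1 / Real.exp 1 - ε) * f Sstar ≤ f (S k) := by
  have hOPT0 : 0 ≤ f Sstar := hnonneg Sstar
  have hγ0 : 0 ≤ γ := hγ.1
  have hexp2 : (2:ℝ) < Real.exp 1 := by
    have := Real.exp_one_gt_d9; linarith
  have hE : (0:ℝ) < 1 - 1 / Real.exp 1 := by
    have : 1 / Real.exp 1 < 1 := by
      rw [div_lt_one (by linarith)]; linarith
    linarith
  have hkR : (1:ℝ) ≤ (k:ℝ) := by exact_mod_cast hk
  have hkpos : (0:ℝ) < (k:ℝ) := by linarith
  have hk0 : ((k:ℝ)) ≠ 0 := ne_of_gt hkpos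
  by_cases hεcase : 1 - 1 / Real.exp 1 - ε ≤ 0
  · have h1 : (1 - 1 / Real.exp 1 - ε) * f Sstar ≤ 0 :=
      mul_nonpos_of_nonpos_of_nonneg hεcase hOPT0
    linarith [hnonneg (S k)]
  push_neg at hεcase
  -- step inequality
  have step : ∀ i, i < k → f Sstar - f (S (i+1)) ≤
      (1 - 1/(k:ℝ)) * (f Sstar - f (S i)) + 2*γ*(f Sstar) := by
    intro i hi
    have hmonoStep : f (S i) ≤ f (S (i+1)) := by
      rw [hSsucc i hi]; exact hmono _ _ (Finset.subset_insert _ _)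
    have h2γ : 0 ≤ 2*γ*(f Sstar) := by positivity
    by_cases hδ : f Sstar - f (S i) ≤ 0
    · have h1 : 0 ≤ (1/(k:ℝ)) * (f (S i) - f Sstar) :=
        mul_nonneg (by positivity) (by linarith)
      have expand : (1 - 1/(k:ℝ)) * (f Sstar - f (S i))
          = (f Sstar - f (S i)) + (1/(k:ℝ))*(f (S i) - f Sstar) := by ring
      linarith
    · push_neg at hδ
      have hne : (Sstar \ S i).Nonempty := by
        rw [Finset.sdiff_nonempty]
        intro hsub'
        have := hmono _ _ hsub'
        linarith
      have hm1 : 0 < (Sstar \ S i).card := Finset.card_pos.mpr hne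
      have hmk : (Sstar \ S i).card ≤ k := by
        rw [← hSstar]; exact Finset.card_le_card Finset.sdiff_subset
      have hmR : (0:ℝ) < ((Sstar \ S i).card : ℝ) := by exact_mod_cast hm1
      have hsum : f Sstar - f (S i) ≤
          ∑ x ∈ Sstar \ S i, (f (insert x (S i)) - f (S i)) := by
        have h1 := submod_sum_bound f hsub (S i) Sstar
        have h2 : f Sstar ≤ f (S i ∪ Sstar) := hmono _ _ Finset.subset_union_right
        linarith
      have hex : ∃ x ∈ Sstar \ S i,
          (f Sstar - f (S i))/(((Sstar \ S i).card : ℝ)) ≤ f (insert x (S i)) - f (S i) := by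
        apply Finset.exists_le_of_sum_le hne
        have heq : ∑ _x ∈ Sstar \ S i, (f Sstar - f (S i))/(((Sstar \ S i).card : ℝ))
            = f Sstar - f (S i) := by
          rw [Finset.sum_const, nsmul_eq_mul, mul_div_cancel₀ _ (ne_of_gt hmR)]
        rw [heq]; exact hsum
      obtain ⟨x, hxT, hx⟩ := hex
      have hxo : x ∉ S i := (Finset.mem_sdiff.mp hxT).2
      have hdiv : (f Sstar - f (S i))/(k:ℝ) ≤
          (f Sstar - f (S i))/(((Sstar \ S i).card : ℝ)) := by
        apply div_le_div_of_nonneg_left (le_of_lt hδ) hmR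
        exact_mod_cast hmk
      have hg := hgreedy i hi x hxo
      have ha1 := abs_le.mp (happrox (insert (s i) (S i)))
      have ha2 := abs_le.mp (happrox (insert x (S i)))
      rw [hSsucc i hi]
      have expand : (1 - 1/(k:ℝ)) * (f Sstar - f (S i))
          = (f Sstar - f (S i)) - (f Sstar - f (S i))/(k:ℝ) := by
        field_simp
      linarith [ha1.1, ha1.2, ha2.1, ha2.2]
  -- induction
  have main : ∀ i, i ≤ k → f Sstar - f (S i) ≤
      ((1 - 1/(k:ℝ))^i + 2*γ*(k:ℝ)*(1 - (1 - 1/(k:ℝ))^i)) * f Sstar := by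
    intro i
    induction i with
    | zero => intro _; simp [hS0, hempty]
    | succ n ih =>
      intro hn
      have hnk : n < k := hn
      have h1 := step n hnk
      have h2 := ih (le_of_lt hnk)
      have hq : (0:ℝ) ≤ 1 - 1/(k:ℝ) := by
        have : 1/(k:ℝ) ≤ 1 := by
          rw [div_le_one hkpos]; exact hkR
        linarith
      have h3 := mul_le_mul_of_nonneg_left h2 hq
      have alg : (1 - 1/(k:ℝ)) * ((((1 - 1/(k:ℝ))^n + 2*γ*(k:ℝ)*(1 - (1 - 1/(k:ℝ))^n))) * f Sstar)
          + 2*γ*(f Sstar)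
          = ((1 - 1/(k:ℝ))^(n+1) + 2*γ*(k:ℝ)*(1 - (1 - 1/(k:ℝ))^(n+1))) * f Sstar := by
        have hk1 : (k:ℝ) * (1/(k:ℝ)) = 1 := mul_one_div_cancel hk0
        linear_combination (-2*γ*f Sstar) * hk1
      linarith
  have hfin := main k le_rfl
  -- bound q := (1-1/k)^k ≤ 1/e
  have hq0 : (0:ℝ) ≤ 1 - 1/(k:ℝ) := by
    have : 1/(k:ℝ) ≤ 1 := by rw [div_le_one hkpos]; exact hkR
    linarith
  have hqe : (1 - 1/(k:ℝ))^k ≤ 1 / Real.exp 1 := by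
    have h1 : 1 - 1/(k:ℝ) ≤ Real.exp (-(1/(k:ℝ))) := by
      have := Real.add_one_le_exp (-(1/(k:ℝ))); linarith
    have h2 : (1 - 1/(k:ℝ))^k ≤ (Real.exp (-(1/(k:ℝ))))^k :=
      pow_le_pow_left₀ hq0 h1 k
    have h3 : (Real.exp (-(1/(k:ℝ))))^k = Real.exp ((k:ℝ) * (-(1/(k:ℝ)))) :=
      (Real.exp_nat_mul _ k).symm
    have h4 : (k:ℝ) * (-(1/(k:ℝ))) = -1 := by field_simp
    rw [h3, h4, Real.exp_neg] at h2
    exact h2.trans (le_of_eq (one_div _).symm)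
  have hqpow0 : (0:ℝ) ≤ (1 - 1/(k:ℝ))^k := pow_nonneg hq0 k
  have hq1 : (1 - 1/(k:ℝ))^k ≤ 1 := by
    have : 1 / Real.exp 1 < 1 := by rw [div_lt_one (by linarith)]; linarith
    linarith
  -- bound 2γk ≤ ε / E
  have hcE : 2*γ*(k:ℝ) ≤ ε / (1 - 1/Real.exp 1) := by
    have h2k : (0:ℝ) < 2*(k:ℝ) := by linarith
    have h1 := mul_le_mul_of_nonneg_right hγ.2 (le_of_lt h2k)
    have heq : ε / (2 * (k:ℝ) * (1 - 1 / Real.exp 1)) * (2*(k:ℝ)) = ε / (1 - 1/Real.exp 1) := by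
      rw [div_mul_eq_mul_div, div_eq_div_iff (by positivity) (ne_of_gt hE)]
      ring
    rw [heq] at h1
    linarith
  set c0 := ε / (1 - 1/Real.exp 1) with hc0
  have hc0le : c0 ≤ 1 := by
    rw [hc0, div_le_one hE]; linarith
  have hid : c0 * (1 - 1/Real.exp 1) = ε := div_mul_cancel₀ ε (ne_of_gt hE)
  have key2 : (1 - 1/(k:ℝ))^k + c0*(1 - (1 - 1/(k:ℝ))^k) ≤ 1/Real.exp 1 + ε := by
    have hp : 0 ≤ (1/Real.exp 1 - (1 - 1/(k:ℝ))^k) * (1 - c0) :=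
      mul_nonneg (by linarith) (by linarith)
    nlinarith [hp, hid]
  have hcoef : (1 - 1/(k:ℝ))^k + 2*γ*(k:ℝ)*(1 - (1 - 1/(k:ℝ))^k) ≤ 1/Real.exp 1 + ε := by
    have h1 : 2*γ*(k:ℝ)*(1 - (1 - 1/(k:ℝ))^k) ≤ c0*(1 - (1 - 1/(k:ℝ))^k) :=
      mul_le_mul_of_nonneg_right hcE (by linarith)
    linarith
  have hfinal := mul_le_mul_of_nonneg_right hcoef hOPT0
  nlinarith [hfin, hfinal]
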